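/- Let (μ_j) be a sequence of nonnegative Borel (Radon) measures on ℝ^n with limsup_{j→∞} μ_j(closedBall 0 1) = +∞ (in particular the total masses on the closed unit ball tend to infinity along a subsequence). Define Z := { x ∈ ℝ^n : for every r > 0, limsup_{j→∞} μ_j(ball x r) = +∞ }. Then Z ∩ closedBall 0 1 ≠ ∅. -/
import Mathlib


open MeasureTheory Metric Filter

/-- If the masses of a sequence of Radon measures blow up on the closed unit
ball, then the mass blow-up set meets the closed unit ball. -/
theorem blowup_set_nonempty {n : ℕ}
    (μ : ℕ → Measure (EuclideanSpace ℝ (Fin n)))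
    (hfin : ∀ j, IsFiniteMeasureOnCompacts (μ j))
    (hblow : Filter.limsup (fun j => μ j (closedBall (0 : EuclideanSpace ℝ (Fin n)) 1))
      atTop = ⊤) :
    ({x : EuclideanSpace ℝ (Fin n) |
        ∀ r > (0 : ℝ), Filter.limsup (fun j => μ j (ball x r)) atTop = ⊤} ∩
      closedBall (0 : EuclideanSpace ℝ (Fin n)) 1).Nonempty := by
  by_contra hempty
  rw [Set.not_nonempty_iff_eq_empty] at hempty
  -- For each x in the closed ball, pick a radius r x > 0 with finite limsup.
  have hx : ∀ x ∈ closedBall (0 : EuclideanSpace ℝ (Fin n)) 1,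
      ∃ r > (0 : ℝ), Filter.limsup (fun j => μ j (ball x r)) atTop ≠ ⊤ := by
    intro x hxB
    by_contra h
    push_neg at h
    have : x ∈ ({x : EuclideanSpace ℝ (Fin n) |
        ∀ r > (0 : ℝ), Filter.limsup (fun j => μ j (ball x r)) atTop = ⊤} ∩
      closedBall (0 : EuclideanSpace ℝ (Fin n)) 1) := by
      refine ⟨fun r hr => ?_, hxB⟩
      exact h r hr
    rw [hempty] at this
    exact this
  choose! r hr hfin' using hx
  -- Compactness: finitely many balls cover the closed unit ball.
  have hcpt : IsCompact (closedBall (0 : EuclideanSpace ℝ (Fin n)) 1) :=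
    isCompact_closedBall _ _
  obtain ⟨t, htsub, hcover⟩ := hcpt.elim_nhds_subcover (fun x => ball x (r x))
    (fun x hxB => ball_mem_nhds x (hr x hxB))
  -- Each ball in the cover has eventually bounded mass.
  have hev : ∀ x ∈ t, ∀ᶠ j in atTop,
      μ j (ball x (r x)) ≤ Filter.limsup (fun j => μ j (ball x (r x))) atTop + 1 := by
    intro x hxt
    have hlt : Filter.limsup (fun j => μ j (ball x (r x))) atTop <
        Filter.limsup (fun j => μ j (ball x (r x))) atTop + 1 :=
      ENNReal.lt_add_right (hfin' x (htsub x hxt)) one_ne_zero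
    exact (eventually_lt_of_limsup_lt hlt).mono fun j hj => hj.le
  have hev' : ∀ᶠ j in atTop, ∀ x ∈ t,
      μ j (ball x (r x)) ≤ Filter.limsup (fun j => μ j (ball x (r x))) atTop + 1 :=
    (Filter.eventually_all_finset t).2 hev
  -- Hence the total mass is eventually bounded.
  set C : ENNReal := ∑ x ∈ t, (Filter.limsup (fun j => μ j (ball x (r x))) atTop + 1) with hC
  have hCfin : C ≠ ⊤ := by
    rw [hC]
    refine (ENNReal.sum_lt_top.2 fun x hxt => ?_).ne
    exact ENNReal.add_lt_top.2 ⟨lt_top_iff_ne_top.2 (hfin' x (htsub x hxt)), ENNReal.one_lt_top⟩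
  have hbound : ∀ᶠ j in atTop, μ j (closedBall (0 : EuclideanSpace ℝ (Fin n)) 1) ≤ C := by
    refine hev'.mono fun j hj => ?_
    calc μ j (closedBall (0 : EuclideanSpace ℝ (Fin n)) 1)
        ≤ μ j (⋃ x ∈ t, ball x (r x)) := measure_mono hcover
      _ ≤ ∑ x ∈ t, μ j (ball x (r x)) := measure_biUnion_finset_le _ _
      _ ≤ C := Finset.sum_le_sum fun x hxt => hj x hxt
  have : Filter.limsup (fun j => μ j (closedBall (0 : EuclideanSpace ℝ (Fin n)) 1)) atTop ≤ C :=
    limsup_le_of_le (by isBoundedDefault) hbound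
  rw [hblow] at this
  exact hCfin (top_le_iff.1 this)
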